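/- Let c̃, C̃ > 0 and let W be a random variable satisfying P(|W| ≥ t) ≤ C̃·e^{−c̃ t²} for all t > 0. Let 𝒜 be an event with P(𝒜) = ε ≤ 1/2. Then there exist constants C₁, C₂ > 0, depending only on c̃ and C̃, such that for every 0 < s < √|log ε|, E[1_𝒜 · e^{sW}] ≤ C₁·ε·e^{C₂·s·√|log ε|}. -/
import Mathlib


open MeasureTheory ENNReal

set_option maxHeartbeats 1000000 in
/-- Let `W` be a sub-Gaussian random variable (`P(|W| ≥ t) ≤ C̃·e^{−c̃t²}` for `t > 0`) and
let `𝒜` be an event with `P(𝒜) = ε ≤ 1/2`.  Then there are `C₁, C₂ > 0` depending only on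
`c̃, C̃` such that for every `0 < s < √|log ε|`,
`E[1_𝒜 e^{sW}] ≤ C₁·ε·e^{C₂·s·√|log ε|}`. -/
theorem statement9 (ctil Ctil : ℝ) (hc : 0 < ctil) (hC : 0 < Ctil) :
    ∃ C₁ C₂ : ℝ, 0 < C₁ ∧ 0 < C₂ ∧
      ∀ (Ω : Type) (_ : MeasurableSpace Ω) (P : Measure Ω), IsProbabilityMeasure P →
        ∀ W : Ω → ℝ, Measurable W →
          (∀ t : ℝ, 0 < t →
            P {ω | t ≤ |W ω|} ≤ ENNReal.ofReal (Ctil * Real.exp (-ctil * t ^ 2))) →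
          ∀ A : Set Ω, MeasurableSet A → ∀ ε : ℝ, 0 < ε → ε ≤ 1 / 2 →
            P A = ENNReal.ofReal ε →
            ∀ s : ℝ, 0 < s → s < Real.sqrt |Real.log ε| →
              (∫⁻ ω in A, ENNReal.ofReal (Real.exp (s * W ω)) ∂P) ≤
                ENNReal.ofReal (C₁ * ε * Real.exp (C₂ * s * Real.sqrt |Real.log ε|)) := by
  set K : ℝ := max (Real.sqrt (2 / ctil)) (1 / ctil) with hKdef
  have hKc : 1 / ctil ≤ K := le_max_right _ _
  have hKs : Real.sqrt (2 / ctil) ≤ K := le_max_left _ _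
  have hKpos : 0 < K := lt_of_lt_of_le (by positivity) hKc
  have hr1 : Real.exp (-ctil) < 1 := Real.exp_lt_one_iff.2 (by linarith)
  have hr0 : 0 ≤ Real.exp (-ctil) := Real.exp_nonneg _
  have h1r : 0 < 1 - Real.exp (-ctil) := by linarith
  refine ⟨1 + Ctil * (1 - Real.exp (-ctil))⁻¹, K + 2, by positivity, by positivity,
    ?_⟩
  intro Ω _ P hP W hW htail A hA ε hε hε2 hPA s hs hssqrt
  set L : ℝ := |Real.log ε| with hLdef
  have hlogneg : Real.log ε < 0 := Real.log_neg hε (by linarith)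
  have hLeq : L = -Real.log ε := abs_of_neg hlogneg
  have hL2 : Real.log 2 ≤ L := by
    have h1 : Real.log ε ≤ Real.log (1 / 2) := Real.log_le_log hε hε2
    rw [hLeq]
    rw [one_div, Real.log_inv] at h1
    linarith
  have hlog2 : (0.6931471803 : ℝ) < Real.log 2 := Real.log_two_gt_d9
  have hLpos : 0 < L := by linarith
  have hsqrtL : 0 < Real.sqrt L := Real.sqrt_pos.2 hLpos
  have hsqL : L = Real.sqrt L * Real.sqrt L := (Real.mul_self_sqrt hLpos.le).symm
  have hsqhalf : (1 : ℝ) / 2 ≤ Real.sqrt L := by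
    nlinarith [Real.sqrt_nonneg L]
  set M : ℝ := K * Real.sqrt L with hMdef
  have hMpos : 0 < M := by positivity
  have hsM : s ≤ ctil * M := by
    have h1 : ctil * (1 / ctil) ≤ ctil * K := by
      exact mul_le_mul_of_nonneg_left hKc hc.le
    rw [mul_one_div, div_self hc.ne'] at h1
    calc s ≤ Real.sqrt L := hssqrt.le
    _ = 1 * Real.sqrt L := (one_mul _).symm
    _ ≤ ctil * K * Real.sqrt L := by
        exact mul_le_mul_of_nonneg_right h1 hsqrtL.le
    _ = ctil * M := by rw [hMdef]; ring
  have hM2 : 2 * L ≤ ctil * M ^ 2 := by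
    have hK2 : 2 / ctil ≤ K ^ 2 := by
      have := Real.sq_sqrt (by positivity : (0:ℝ) ≤ 2 / ctil)
      nlinarith [Real.sqrt_nonneg (2 / ctil)]
    have : M ^ 2 = K ^ 2 * L := by
      rw [hMdef, mul_pow, sq (Real.sqrt L), ← hsqL]
    rw [this]
    rw [div_le_iff₀ hc] at hK2
    nlinarith
  -- the splitting set
  set B : Set Ω := {ω | M ≤ |W ω|} with hBdef
  have hWabs : Measurable fun ω => |W ω| := hW.abs
  have hB : MeasurableSet B := measurableSet_le measurable_const hWabs
  set f : Ω → ℝ≥0∞ := fun ω => ENNReal.ofReal (Real.exp (s * W ω)) with hfdef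
  have hfm : Measurable f := (Real.measurable_exp.comp (hW.const_mul s)).ennreal_ofReal
  -- tail sets
  set T : ℕ → Set Ω := fun k => {ω | M + k ≤ |W ω|} with hTdef
  have hT : ∀ k, MeasurableSet (T k) := fun k =>
    measurableSet_le measurable_const hWabs
  -- piece 1
  have h1 : ∫⁻ ω in A \ B, f ω ∂P ≤ ENNReal.ofReal (Real.exp (s * M) * ε) := by
    calc ∫⁻ ω in A \ B, f ω ∂P
        ≤ ∫⁻ _ in A \ B, ENNReal.ofReal (Real.exp (s * M)) ∂P := by
          refine setLIntegral_mono measurable_const fun ω hω => ?_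
          refine ENNReal.ofReal_le_ofReal (Real.exp_le_exp.2 ?_)
          have h2 : ¬ (M ≤ |W ω|) := hω.2
          have h3 : W ω ≤ |W ω| := le_abs_self _
          have h4 : W ω ≤ M := by push_neg at h2; linarith
          exact mul_le_mul_of_nonneg_left h4 hs.le
      _ = ENNReal.ofReal (Real.exp (s * M)) * P (A \ B) := setLIntegral_const _ _
      _ ≤ ENNReal.ofReal (Real.exp (s * M)) * ENNReal.ofReal ε := by
          refine mul_le_mul_right ?_ _
          rw [← hPA]
          exact measure_mono Set.diff_subset
      _ = ENNReal.ofReal (Real.exp (s * M) * ε) :=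
          (ENNReal.ofReal_mul (Real.exp_nonneg _)).symm
  -- covering of B by annuli
  have hcover : B ⊆ ⋃ k : ℕ, (T k \ T (k + 1)) := by
    intro ω hω
    have hω' : M ≤ |W ω| := hω
    set k : ℕ := ⌊|W ω| - M⌋₊ with hk
    have hnn : 0 ≤ |W ω| - M := by linarith
    have hk1 : (k : ℝ) ≤ |W ω| - M := Nat.floor_le hnn
    have hk2 : |W ω| - M < k + 1 := Nat.lt_floor_add_one _
    refine Set.mem_iUnion.2 ⟨k, ?_, ?_⟩
    · show M + (k : ℝ) ≤ |W ω|; linarith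
    · show ¬ (M + ((k : ℕ) + 1 : ℕ) ≤ |W ω|)
      push_cast
      linarith
  -- per-annulus bound
  have hann : ∀ k : ℕ, ∫⁻ ω in T k \ T (k + 1), f ω ∂P ≤
      ENNReal.ofReal ((Ctil * Real.exp (s * M + s - 2 * L)) * Real.exp (-ctil) ^ k) := by
    intro k
    have hpt : ∀ ω ∈ T k \ T (k + 1), f ω ≤
        ENNReal.ofReal (Real.exp (s * (M + k + 1))) := by
      intro ω hω
      refine ENNReal.ofReal_le_ofReal (Real.exp_le_exp.2 ?_)
      have h2 : ¬ (M + ((k : ℕ) + 1 : ℕ) ≤ |W ω|) := hω.2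
      push_cast at h2
      have h3 : W ω ≤ |W ω| := le_abs_self _
      have h4 : W ω ≤ M + k + 1 := by push_neg at h2; linarith
      exact mul_le_mul_of_nonneg_left h4 hs.le
    calc ∫⁻ ω in T k \ T (k + 1), f ω ∂P
        ≤ ∫⁻ _ in T k \ T (k + 1), ENNReal.ofReal (Real.exp (s * (M + k + 1))) ∂P :=
          setLIntegral_mono measurable_const hpt
      _ = ENNReal.ofReal (Real.exp (s * (M + k + 1))) * P (T k \ T (k + 1)) :=
          setLIntegral_const _ _
      _ ≤ ENNReal.ofReal (Real.exp (s * (M + k + 1))) *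
            ENNReal.ofReal (Ctil * Real.exp (-ctil * (M + k) ^ 2)) := by
          refine mul_le_mul_right ?_ _
          refine le_trans (measure_mono Set.diff_subset) ?_
          exact htail (M + k) (by positivity)
      _ = ENNReal.ofReal (Real.exp (s * (M + k + 1)) *
            (Ctil * Real.exp (-ctil * (M + k) ^ 2))) :=
          (ENNReal.ofReal_mul (Real.exp_nonneg _)).symm
      _ ≤ ENNReal.ofReal ((Ctil * Real.exp (s * M + s - 2 * L)) * Real.exp (-ctil) ^ k) := by
          refine ENNReal.ofReal_le_ofReal ?_
          have hek : Real.exp (-ctil) ^ k = Real.exp ((k : ℝ) * (-ctil)) :=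
            (Real.exp_nat_mul _ k).symm
          rw [hek, ← mul_assoc, mul_comm (Real.exp (s * (M + k + 1))) Ctil, mul_assoc,
            mul_assoc, ← Real.exp_add, ← Real.exp_add]
          refine mul_le_mul_of_nonneg_left (Real.exp_le_exp.2 ?_) hC.le
          have hkk : (k : ℝ) ≤ (k : ℝ) ^ 2 := by
            have : k ≤ k ^ 2 := Nat.le_self_pow two_ne_zero k
            exact_mod_cast this
          have hknn : (0 : ℝ) ≤ k := Nat.cast_nonneg k
          nlinarith [mul_le_mul_of_nonneg_right hsM hknn,
            mul_nonneg (mul_nonneg hc.le hMpos.le) hknn]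
  -- piece 2
  have hsum : (∑' k : ℕ, ENNReal.ofReal ((Ctil * Real.exp (s * M + s - 2 * L)) *
      Real.exp (-ctil) ^ k)) =
      ENNReal.ofReal ((Ctil * Real.exp (s * M + s - 2 * L)) * (1 - Real.exp (-ctil))⁻¹) := by
    have hnn : (0:ℝ) ≤ Ctil * Real.exp (s * M + s - 2 * L) := by positivity
    calc (∑' k : ℕ, ENNReal.ofReal ((Ctil * Real.exp (s * M + s - 2 * L)) *
          Real.exp (-ctil) ^ k))
        = ENNReal.ofReal (Ctil * Real.exp (s * M + s - 2 * L)) *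
            ∑' k : ℕ, (ENNReal.ofReal (Real.exp (-ctil))) ^ k := by
          rw [← ENNReal.tsum_mul_left]
          congr 1; funext k
          rw [← ENNReal.ofReal_pow hr0, ← ENNReal.ofReal_mul hnn]
      _ = ENNReal.ofReal (Ctil * Real.exp (s * M + s - 2 * L)) *
            (1 - ENNReal.ofReal (Real.exp (-ctil)))⁻¹ := by
          rw [ENNReal.tsum_geometric]
      _ = ENNReal.ofReal ((Ctil * Real.exp (s * M + s - 2 * L)) *
            (1 - Real.exp (-ctil))⁻¹) := by
          rw [ENNReal.ofReal_mul hnn, ENNReal.ofReal_inv_of_pos h1r,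
            ENNReal.ofReal_sub _ hr0, ENNReal.ofReal_one]
  have h2 : ∫⁻ ω in A ∩ B, f ω ∂P ≤
      ENNReal.ofReal ((Ctil * Real.exp (s * M + s - 2 * L)) * (1 - Real.exp (-ctil))⁻¹) := by
    calc ∫⁻ ω in A ∩ B, f ω ∂P
        ≤ ∫⁻ ω in ⋃ k : ℕ, (T k \ T (k + 1)), f ω ∂P :=
          lintegral_mono_set (le_trans Set.inter_subset_right hcover)
      _ ≤ ∑' k : ℕ, ∫⁻ ω in T k \ T (k + 1), f ω ∂P := lintegral_iUnion_le _ _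
      _ ≤ ∑' k : ℕ, ENNReal.ofReal ((Ctil * Real.exp (s * M + s - 2 * L)) *
            Real.exp (-ctil) ^ k) := ENNReal.tsum_le_tsum hann
      _ = _ := hsum
  -- combine
  rw [← lintegral_inter_add_diff f A hB]
  refine le_trans (add_le_add h2 h1) ?_
  rw [← ENNReal.ofReal_add (by positivity) (by positivity)]
  refine ENNReal.ofReal_le_ofReal ?_
  -- real arithmetic
  have heps2 : Real.exp (-(2 * L)) = ε ^ 2 := by
    rw [hLeq]
    rw [show -(2 * -Real.log ε) = Real.log ε + Real.log ε by ring, Real.exp_add,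
      Real.exp_log hε, sq]
  have hse : s ≤ 2 * (s * Real.sqrt L) := by
    have h := mul_le_mul_of_nonneg_left hsqhalf hs.le
    linarith
  have hsMe : s * M = K * (s * Real.sqrt L) := by rw [hMdef]; ring
  have hsnn : 0 ≤ s * Real.sqrt L := by positivity
  have hkey : Real.exp (s * M + s - 2 * L) ≤ ε * Real.exp ((K + 2) * s * Real.sqrt L) := by
    have h5 : Real.exp (s * M + s - 2 * L) =
        Real.exp (s * M + s) * Real.exp (-(2 * L)) := by
      rw [← Real.exp_add]; ring_nf
    rw [h5, heps2]
    have h6 : Real.exp (s * M + s) ≤ Real.exp ((K + 2) * s * Real.sqrt L) := by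
      refine Real.exp_le_exp.2 ?_
      rw [hsMe]; nlinarith
    have h7 : ε ^ 2 ≤ ε := by nlinarith
    calc Real.exp (s * M + s) * ε ^ 2 ≤ Real.exp ((K + 2) * s * Real.sqrt L) * ε :=
          mul_le_mul h6 h7 (by positivity) (Real.exp_nonneg _)
      _ = ε * Real.exp ((K + 2) * s * Real.sqrt L) := mul_comm _ _
  have hkey1 : Real.exp (s * M) * ε ≤ ε * Real.exp ((K + 2) * s * Real.sqrt L) := by
    rw [mul_comm]
    refine mul_le_mul_of_nonneg_left (Real.exp_le_exp.2 ?_) hε.le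
    rw [hsMe]; nlinarith
  have hinv : 0 ≤ (1 - Real.exp (-ctil))⁻¹ := by positivity
  calc Ctil * Real.exp (s * M + s - 2 * L) * (1 - Real.exp (-ctil))⁻¹ +
        Real.exp (s * M) * ε
      ≤ Ctil * (ε * Real.exp ((K + 2) * s * Real.sqrt L)) * (1 - Real.exp (-ctil))⁻¹ +
        ε * Real.exp ((K + 2) * s * Real.sqrt L) := by
        refine add_le_add ?_ hkey1
        refine mul_le_mul_of_nonneg_right (mul_le_mul_of_nonneg_left hkey hC.le) hinv
    _ = (1 + Ctil * (1 - Real.exp (-ctil))⁻¹) * ε *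
        Real.exp ((K + 2) * s * Real.sqrt L) := by ring
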